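/- Let n ≥ 4 and let α_n be an optimal set of n-means for P. Then card(α_n ∩ [0,1/3]) ≥ 2 and card(α_n ∩ [2/3,1]) ≥ 2. -/

import Mathlib

open MeasureTheory Set
open scoped ENNReal

noncomputable section

/-- The similarity map `S_j(x) = x/3^j + 1 - 1/3^(j-1)`. -/
def Smap (j : ℕ) (x : ℝ) : ℝ := x / 3 ^ j + 1 - 1 / 3 ^ (j - 1)

/-- The similarity ratio `s_j = 3^(-j)`. -/
def srat (j : ℕ) : ℝ := (3 : ℝ)⁻¹ ^ j

/-- The probability `p_j = 2^(-j)`. -/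
def prob (j : ℕ) : ℝ := (2 : ℝ)⁻¹ ^ j

/-- `J_j = S_j([0,1])`. -/
def Jset (j : ℕ) : Set ℝ := Smap j '' Set.Icc 0 1

/-- For a word `ω = ω₁⋯ω_n`, `S_ω = S_{ω₁} ∘ ⋯ ∘ S_{ω_n}`. -/
def Sword : List ℕ → ℝ → ℝ
  | [] => id
  | j :: ω => Smap j ∘ Sword ω

/-- `s_ω = s_{ω₁} ⋯ s_{ω_n}`. -/
def sword (ω : List ℕ) : ℝ := (ω.map srat).prod

/-- `p_ω = p_{ω₁} ⋯ p_{ω_n}`. -/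
def pword (ω : List ℕ) : ℝ := (ω.map prob).prod

/-- `J_ω = S_ω([0,1])`. -/
def Jword (ω : List ℕ) : Set ℝ := Sword ω '' Set.Icc 0 1

/-- `ω⁻(ω_{|ω|} + j)` : the word obtained from `ω` by increasing its last letter by `j`. -/
def wordInc (ω : List ℕ) (j : ℕ) : List ℕ := ω.dropLast ++ [ω.getLastD 1 + j]

/-- `a(ω) = S_ω(1/2)`. -/
def aw (ω : List ℕ) : ℝ := Sword ω (1 / 2)

/-- `a(ω, ∞) = S_{ω⁻(ω_{|ω|}+1)}(1/2) + s_{ω⁻(ω_{|ω|}+1)}`. -/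
def awInf (ω : List ℕ) : ℝ := Sword (wordInc ω 1) (1 / 2) + sword (wordInc ω 1)

/-- `J_{(ω,∞)} = ⋃_{j ≥ 1} J_{ω⁻(ω_{|ω|}+j)}`. -/
def JwordInf (ω : List ℕ) : Set ℝ := ⋃ j : ℕ, Jword (wordInc ω (j + 1))

/-- A (nonempty) word over the alphabet `ℕ = {1, 2, 3, …}`. -/
def IsWord (ω : List ℕ) : Prop := ω ≠ [] ∧ ∀ i ∈ ω, 1 ≤ i

/-- The self-similarity equation `P = ∑_{j=1}^∞ 2^{-j} · P ∘ S_j^{-1}`. -/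
def SelfSim (P : Measure ℝ) : Prop :=
  P = Measure.sum fun j : ℕ => ((2 : ℝ≥0∞) ^ (j + 1))⁻¹ • P.map (Smap (j + 1))

/-- The distortion error `∫ min_{a ∈ A} (x - a)² dP(x)` of a set `A` of points. -/
def err (P : Measure ℝ) (A : Set ℝ) : ℝ :=
  ∫ x, sInf ((fun a => (x - a) ^ 2) '' A) ∂P

/-- The `n`-th quantization error. -/
def quantErr (P : Measure ℝ) (n : ℕ) : ℝ :=
  sInf {v | ∃ A : Set ℝ, A.Finite ∧ A.Nonempty ∧ A.ncard ≤ n ∧ v = err P A}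

/-- An optimal set of `n`-means. -/
def IsOptimal (P : Measure ℝ) (n : ℕ) (A : Set ℝ) : Prop :=
  A.Finite ∧ A.Nonempty ∧ A.ncard ≤ n ∧ err P A = quantErr P n

/-- The Voronoi region of `a` with respect to `A`. -/
def voronoi (A : Set ℝ) (a : ℝ) : Set ℝ := {x | ∀ b ∈ A, |x - a| ≤ |x - b|}

/-- `α(ℓ) = {a(ω) : p_ω = 2^{-ℓ}} ∪ {a(ω,∞) : p_ω = 2^{-ℓ}}`. -/
def alphaSet (l : ℕ) : Set ℝ :=
  {x | ∃ ω : List ℕ, IsWord ω ∧ pword ω = (2 : ℝ)⁻¹ ^ l ∧ (x = aw ω ∨ x = awInf ω)}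

/-- The set `α_n(I)` built from `α(ℓ)` and `I ⊆ α(ℓ)`. -/
def alphaNI (l : ℕ) (I : Set ℝ) : Set ℝ :=
  (alphaSet l \ I)
    ∪ {x | ∃ ω : List ℕ, IsWord ω ∧ pword ω = (2 : ℝ)⁻¹ ^ l ∧ aw ω ∈ I ∧
        (x = aw (ω ++ [1]) ∨ x = awInf (ω ++ [1]))}
    ∪ {x | ∃ ω : List ℕ, IsWord ω ∧ pword ω = (2 : ℝ)⁻¹ ^ l ∧ awInf ω ∈ I ∧
        (x = aw (wordInc ω 1) ∨ x = awInf (wordInc ω 1))}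

set_option linter.unusedSectionVars false

namespace QAux


/-- distance-squared function to a point set -/
def dfun (A : Set ℝ) (x : ℝ) : ℝ := sInf ((fun a => (x - a) ^ 2) '' A)

lemma bddBelow_dset (A : Set ℝ) (x : ℝ) : BddBelow ((fun a => (x - a) ^ 2) '' A) :=
  ⟨0, fun y hy => by rcases hy with ⟨a, _, rfl⟩; positivity⟩

lemma dfun_nonneg (A : Set ℝ) (x : ℝ) : 0 ≤ dfun A x :=
  Real.sInf_nonneg (fun y hy => by rcases hy with ⟨a, _, rfl⟩; positivity)

lemma dfun_le {A : Set ℝ} {a : ℝ} (ha : a ∈ A) (x : ℝ) : dfun A x ≤ (x - a) ^ 2 :=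
  csInf_le (bddBelow_dset A x) ⟨a, ha, rfl⟩

lemma le_dfun {A : Set ℝ} (hne : A.Nonempty) {c x : ℝ} (h : ∀ a ∈ A, c ≤ (x - a) ^ 2) :
    c ≤ dfun A x :=
  le_csInf (hne.image _) (fun y hy => by rcases hy with ⟨a, ha, rfl⟩; exact h a ha)

lemma dfun_singleton (a x : ℝ) : dfun {a} x = (x - a) ^ 2 := by
  simp [dfun]

lemma dfun_insert {A : Set ℝ} (hne : A.Nonempty) (b x : ℝ) :
    dfun (insert b A) x = min ((x - b) ^ 2) (dfun A x) := by
  unfold dfun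
  rw [Set.image_insert_eq, csInf_insert (bddBelow_dset A x) (hne.image _)]

lemma dfun_anti {A B : Set ℝ} (h : A ⊆ B) (hne : A.Nonempty) (x : ℝ) :
    dfun B x ≤ dfun A x :=
  csInf_le_csInf (bddBelow_dset B x) (hne.image _) (Set.image_mono h)

lemma dfun_exists {A : Set ℝ} (hfin : A.Finite) (hne : A.Nonempty) (x : ℝ) :
    ∃ a ∈ A, dfun A x = (x - a) ^ 2 := by
  have h := (hne.image (fun a => (x - a) ^ 2)).csInf_mem (hfin.image _)
  rcases h with ⟨a, ha, h⟩
  exact ⟨a, ha, h.symm⟩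

lemma dfun_pos {A : Set ℝ} (hfin : A.Finite) (hne : A.Nonempty) {x : ℝ} (hx : x ∉ A) :
    0 < dfun A x := by
  obtain ⟨a, ha, h⟩ := dfun_exists hfin hne x
  rw [h]
  have : x ≠ a := fun hxa => hx (hxa ▸ ha)
  have : x - a ≠ 0 := sub_ne_zero.2 this
  positivity

lemma measurable_dfun {A : Set ℝ} (hfin : A.Finite) : Measurable (dfun A) := by
  refine Set.Finite.induction_on (motive := fun s _ => Measurable (dfun s)) A hfin
    (by show Measurable (dfun (∅ : Set ℝ))
        rw [show dfun (∅ : Set ℝ) = fun _ => 0 from funext fun x => by simp [dfun]]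
        exact measurable_const) ?_
  rintro b A hb hAfin ih
  rcases A.eq_empty_or_nonempty with rfl | hne
  · rw [show insert b (∅ : Set ℝ) = {b} by simp,
       show dfun {b} = fun x : ℝ => (x - b) ^ 2 from funext fun x => dfun_singleton b x]
    fun_prop
  · have : dfun (insert b A) = fun x => min ((x - b) ^ 2) (dfun A x) := by
      funext x; exact dfun_insert hne b x
    rw [this]
    exact Measurable.min (by fun_prop) ih

lemma dfun_bound {A : Set ℝ} {a₀ : ℝ} (ha₀ : a₀ ∈ A) {x : ℝ} (hx : x ∈ Icc (0:ℝ) 1) :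
    |dfun A x| ≤ (1 + |a₀|) ^ 2 := by
  rw [abs_of_nonneg (dfun_nonneg A x)]
  refine (dfun_le ha₀ x).trans ?_
  have h1 : |x - a₀| ≤ 1 + |a₀| := by
    have := abs_sub_abs_le_abs_sub x a₀
    have hx1 : |x| ≤ 1 := by rw [abs_le]; constructor <;> [linarith [hx.1]; exact hx.2]
    calc |x - a₀| ≤ |x| + |a₀| := abs_sub _ _
      _ ≤ 1 + |a₀| := by linarith
  calc (x - a₀) ^ 2 = |x - a₀| ^ 2 := (sq_abs _).symm
    _ ≤ (1 + |a₀|) ^ 2 := by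
        apply pow_le_pow_left₀ (abs_nonneg _) h1



def Sm (x : ℝ) : ℝ := x / 3
def Um (x : ℝ) : ℝ := x / 3 + 2 / 3

lemma measurable_Smap (j : ℕ) : Measurable (Smap j) := by unfold Smap; fun_prop
@[fun_prop] lemma measurable_Sm : Measurable Sm := by unfold Sm; fun_prop
@[fun_prop] lemma measurable_Um : Measurable Um := by unfold Um; fun_prop

lemma Smap_one : Smap 1 = Sm := by
  funext x; simp [Smap, Sm]

lemma Smap_succ_succ (j : ℕ) : Smap (j + 2) = Um ∘ Smap (j + 1) := by
  funext x
  show x / 3 ^ (j + 2) + 1 - 1 / 3 ^ (j + 2 - 1) = Um (x / 3 ^ (j + 1) + 1 - 1 / 3 ^ (j + 1 - 1))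
  have h1 : j + 2 - 1 = j + 1 := rfl
  have h2 : j + 1 - 1 = j := rfl
  rw [h1, h2]
  unfold Um
  have h3 : (3:ℝ) ^ (j + 2) = 3 ^ j * 9 := by ring
  have h4 : (3:ℝ) ^ (j + 1) = 3 ^ j * 3 := by ring
  have hp : (0:ℝ) < 3 ^ j := by positivity
  rw [h3, h4]
  field_simp
  ring

variable {P : Measure ℝ} [IsProbabilityMeasure P]

lemma Pkey (hself : SelfSim P) {s : Set ℝ} (hs : MeasurableSet s) :
    P s = 2⁻¹ * P (Sm ⁻¹' s) + 2⁻¹ * P (Um ⁻¹' s) := by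
  have happ : ∀ t : Set ℝ, MeasurableSet t →
      P t = ∑' j : ℕ, ((2 : ℝ≥0∞) ^ (j + 1))⁻¹ * P (Smap (j + 1) ⁻¹' t) := by
    intro t ht
    conv_lhs => rw [hself]
    rw [Measure.sum_apply _ ht]
    refine tsum_congr fun j => ?_
    rw [Measure.smul_apply, Measure.map_apply (measurable_Smap _) ht, smul_eq_mul]
  rw [happ s hs, tsum_eq_zero_add' ENNReal.summable]
  have hz : ((2 : ℝ≥0∞) ^ (0 + 1))⁻¹ * P (Smap (0 + 1) ⁻¹' s) = 2⁻¹ * P (Sm ⁻¹' s) := by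
    norm_num [Smap_one]
  rw [hz]
  congr 1
  have hterm : ∀ j : ℕ, ((2:ℝ≥0∞) ^ (j + 1 + 1))⁻¹ * P (Smap (j + 1 + 1) ⁻¹' s)
      = 2⁻¹ * (((2:ℝ≥0∞) ^ (j + 1))⁻¹ * P (Smap (j + 1) ⁻¹' (Um ⁻¹' s))) := by
    intro j
    have : Smap (j + 1 + 1) ⁻¹' s = Smap (j + 1) ⁻¹' (Um ⁻¹' s) := by
      rw [show j + 1 + 1 = j + 2 from rfl, Smap_succ_succ j, Set.preimage_comp]
    rw [this, pow_succ, ENNReal.mul_inv (Or.inr (by norm_num)) (Or.inl (ENNReal.pow_ne_top (by norm_num)))]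
    ring
  rw [tsum_congr hterm, ENNReal.tsum_mul_left, ← happ _ (measurable_Um hs)]

variable (hsupp : P (Set.Icc 0 1) = 1)
include hsupp

lemma Pcompl : P (Set.Icc (0:ℝ) 1)ᶜ = 0 := by
  rw [measure_compl measurableSet_Icc (measure_ne_top _ _), hsupp, measure_univ, tsub_self]

lemma Pnull_out {s : Set ℝ} (h : ∀ x ∈ s, x < 0 ∨ 1 < x) : P s = 0 := by
  refine measure_mono_null (fun x hx => ?_) (Pcompl hsupp)
  intro hx1
  rcases h x hx with h' | h'
  · exact absurd hx1.1 (not_le.2 h')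
  · exact absurd hx1.2 (not_le.2 h')

lemma ae_mem_Icc : ∀ᵐ x ∂P, x ∈ Set.Icc (0:ℝ) 1 := by
  rw [ae_iff]
  exact measure_mono_null (fun x hx => hx) (Pcompl hsupp)

omit hsupp in
lemma Sm_preimage (a b : ℝ) : Sm ⁻¹' Set.Icc a b = Set.Icc (3*a) (3*b) := by
  ext x
  simp only [Sm, Set.mem_preimage, Set.mem_Icc]
  constructor <;> rintro ⟨h1, h2⟩ <;> constructor <;> linarith

omit hsupp in
lemma Um_preimage (a b : ℝ) : Um ⁻¹' Set.Icc a b = Set.Icc (3*a-2) (3*b-2) := by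
  ext x
  simp only [Um, Set.mem_preimage, Set.mem_Icc]
  constructor <;> rintro ⟨h1, h2⟩ <;> constructor <;> linarith

omit hsupp in
lemma mass_Icc (hself : SelfSim P) (a b : ℝ) :
    P (Set.Icc a b) = 2⁻¹ * P (Set.Icc (3*a) (3*b)) + 2⁻¹ * P (Set.Icc (3*a-2) (3*b-2)) := by
  rw [Pkey hself measurableSet_Icc, Sm_preimage, Um_preimage]

lemma mass_left (hself : SelfSim P) : P (Set.Icc (0:ℝ) (1/3)) = 2⁻¹ := by
  have h := mass_Icc (P := P) hself 0 (1/3)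
  norm_num at h
  rw [hsupp, Pnull_out hsupp (s := Set.Icc (-2:ℝ) (-1))
      (fun x hx => Or.inl (lt_of_le_of_lt hx.2 (by norm_num)))] at h
  simpa using h

lemma mass_right (hself : SelfSim P) : P (Set.Icc (2/3:ℝ) 1) = 2⁻¹ := by
  have h := mass_Icc (P := P) hself (2/3) 1
  norm_num at h
  rw [hsupp, Pnull_out hsupp (s := Set.Icc (2:ℝ) 3)
      (fun x hx => Or.inr (lt_of_lt_of_le (by norm_num) hx.1))] at h
  simpa using h

lemma mass_J11 (hself : SelfSim P) : P (Set.Icc (0:ℝ) (1/9)) = 4⁻¹ := by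
  have h := mass_Icc (P := P) hself 0 (1/9)
  norm_num at h
  rw [mass_left hsupp hself, Pnull_out hsupp (s := Set.Icc (-2:ℝ) (-(5/3)))
      (fun x hx => Or.inl (lt_of_le_of_lt hx.2 (by norm_num)))] at h
  rw [h]
  rw [mul_zero, add_zero, ← ENNReal.mul_inv (by norm_num) (by norm_num)]
  norm_num

lemma mass_J12 (hself : SelfSim P) : P (Set.Icc (2/9:ℝ) (1/3)) = 4⁻¹ := by
  have h := mass_Icc (P := P) hself (2/9) (1/3)
  norm_num at h
  rw [mass_right hsupp hself, Pnull_out hsupp (s := Set.Icc (-(4/3):ℝ) (-1))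
      (fun x hx => Or.inl (lt_of_le_of_lt hx.2 (by norm_num)))] at h
  rw [h]
  rw [mul_zero, add_zero, ← ENNReal.mul_inv (by norm_num) (by norm_num)]
  norm_num

lemma mass_J21 (hself : SelfSim P) : P (Set.Icc (2/3:ℝ) (7/9)) = 4⁻¹ := by
  have h := mass_Icc (P := P) hself (2/3) (7/9)
  norm_num at h
  rw [mass_left hsupp hself, Pnull_out hsupp (s := Set.Icc (2:ℝ) (7/3))
      (fun x hx => Or.inr (lt_of_lt_of_le (by norm_num) hx.1))] at h
  rw [h]
  rw [mul_zero, zero_add, ← ENNReal.mul_inv (by norm_num) (by norm_num)]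
  norm_num

lemma mass_J22 (hself : SelfSim P) : P (Set.Icc (8/9:ℝ) 1) = 4⁻¹ := by
  have h := mass_Icc (P := P) hself (8/9) 1
  norm_num at h
  rw [mass_right hsupp hself, Pnull_out hsupp (s := Set.Icc (8/3:ℝ) 3)
      (fun x hx => Or.inr (lt_of_lt_of_le (by norm_num) hx.1))] at h
  rw [h]
  rw [mul_zero, zero_add, ← ENNReal.mul_inv (by norm_num) (by norm_num)]
  norm_num

lemma atom_pow (hself : SelfSim P) : ∀ (k : ℕ) (x : ℝ), P {x} ≤ 2⁻¹ ^ k := by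
  intro k
  induction k with
  | zero => intro x; simpa using prob_le_one
  | succ k ih =>
    intro x
    by_cases hx : x ∈ Set.Icc (0:ℝ) 1
    · have hk := Pkey (P := P) hself (measurableSet_singleton x)
      have hS : Sm ⁻¹' ({x} : Set ℝ) = {3*x} := by
        ext y; simp only [Sm, Set.mem_preimage, Set.mem_singleton_iff]
        constructor <;> intro h <;> linarith
      have hU : Um ⁻¹' ({x} : Set ℝ) = {3*x - 2} := by
        ext y; simp only [Um, Set.mem_preimage, Set.mem_singleton_iff]
        constructor <;> intro h <;> linarith
      rw [hS, hU] at hk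
      rcases lt_or_ge x (2/3) with hc | hc
      · have h0 : P {3*x - 2} = 0 :=
          Pnull_out hsupp (fun y hy => Or.inl (by rw [Set.mem_singleton_iff] at hy; rw [hy]; linarith))
        rw [hk, h0, mul_zero, add_zero, pow_succ, mul_comm]
        exact mul_le_mul_left (ih (3*x)) _
      · have h0 : P {3*x} = 0 :=
          Pnull_out hsupp (fun y hy => Or.inr (by rw [Set.mem_singleton_iff] at hy; rw [hy]; linarith))
        rw [hk, h0, mul_zero, zero_add, pow_succ, mul_comm]
        exact mul_le_mul_left (ih (3*x - 2)) _
    · have : P {x} = 0 :=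
        measure_mono_null (fun y hy => by rw [Set.mem_singleton_iff] at hy; rw [hy]; exact hx)
          (Pcompl hsupp)
      rw [this]; exact zero_le

lemma atom_zero (hself : SelfSim P) (x : ℝ) : P {x} = 0 := by
  by_contra h
  obtain ⟨k, hk⟩ := ENNReal.exists_inv_two_pow_lt h
  exact absurd (atom_pow hsupp hself k x) (not_le.2 hk)

lemma Pfin_null (hself : SelfSim P) {A : Set ℝ} (hA : A.Finite) : P A = 0 := by
  haveI : NullSingletonClass P := ⟨atom_zero hsupp hself⟩
  exact hA.countable.measure_zero P

omit hsupp in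
lemma Meq (hself : SelfSim P) : P = (2⁻¹ : ℝ≥0∞) • P.map Sm + (2⁻¹ : ℝ≥0∞) • P.map Um := by
  refine Measure.ext fun s hs => ?_
  rw [Measure.add_apply, Measure.smul_apply, Measure.smul_apply,
      Measure.map_apply measurable_Sm hs, Measure.map_apply measurable_Um hs,
      smul_eq_mul, smul_eq_mul]
  exact Pkey hself hs

lemma integrable_of_bound {f : ℝ → ℝ} {C : ℝ} (hf : Measurable f)
    (hb : ∀ x ∈ Set.Icc (0:ℝ) 1, |f x| ≤ C) : Integrable f P := by
  refine Integrable.mono' (integrable_const C) hf.aestronglyMeasurable ?_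
  exact (ae_mem_Icc hsupp).mono fun x hx => by simpa [Real.norm_eq_abs] using hb x hx

omit hsupp in
lemma Sm_mem {x : ℝ} (hx : x ∈ Set.Icc (0:ℝ) 1) : Sm x ∈ Set.Icc (0:ℝ) 1 := by
  obtain ⟨h1, h2⟩ := hx; exact ⟨by unfold Sm; linarith, by unfold Sm; linarith⟩

omit hsupp in
lemma Um_mem {x : ℝ} (hx : x ∈ Set.Icc (0:ℝ) 1) : Um x ∈ Set.Icc (0:ℝ) 1 := by
  obtain ⟨h1, h2⟩ := hx; exact ⟨by unfold Um; linarith, by unfold Um; linarith⟩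

lemma T0 (hself : SelfSim P) {f : ℝ → ℝ} {C : ℝ} (hf : Measurable f)
    (hb : ∀ x ∈ Set.Icc (0:ℝ) 1, |f x| ≤ C) :
    ∫ x, f x ∂P = (1/2) * ∫ x, f (Sm x) ∂P + (1/2) * ∫ x, f (Um x) ∂P := by
  have hfS : Integrable (fun x => f (Sm x)) P :=
    integrable_of_bound hsupp (hf.comp measurable_Sm) (fun x hx => hb _ (Sm_mem hx))
  have hfU : Integrable (fun x => f (Um x)) P :=
    integrable_of_bound hsupp (hf.comp measurable_Um) (fun x hx => hb _ (Um_mem hx))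
  have hIS : Integrable f (P.map Sm) :=
    (integrable_map_measure hf.aestronglyMeasurable measurable_Sm.aemeasurable).2 hfS
  have hIU : Integrable f (P.map Um) :=
    (integrable_map_measure hf.aestronglyMeasurable measurable_Um.aemeasurable).2 hfU
  have hne : (2⁻¹ : ℝ≥0∞) ≠ ⊤ := by norm_num
  calc ∫ x, f x ∂P = ∫ x, f x ∂((2⁻¹ : ℝ≥0∞) • P.map Sm + (2⁻¹ : ℝ≥0∞) • P.map Um) := by rw [← Meq hself]
    _ = ∫ x, f x ∂((2⁻¹ : ℝ≥0∞) • P.map Sm) + ∫ x, f x ∂((2⁻¹ : ℝ≥0∞) • P.map Um) :=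
        integral_add_measure (hIS.smul_measure hne) (hIU.smul_measure hne)
    _ = (1/2) * ∫ x, f (Sm x) ∂P + (1/2) * ∫ x, f (Um x) ∂P := by
        rw [integral_smul_measure, integral_smul_measure,
            integral_map measurable_Sm.aemeasurable hf.aestronglyMeasurable,
            integral_map measurable_Um.aemeasurable hf.aestronglyMeasurable]
        norm_num [ENNReal.toReal_inv]

lemma TS' (hself : SelfSim P) {f : ℝ → ℝ} {C : ℝ} {u v : ℝ} (hu : 0 ≤ u) (hv : v ≤ 1)
    (hf : Measurable f) (hb : ∀ x ∈ Set.Icc (0:ℝ) 1, |f x| ≤ C) :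
    ∫ x in Set.Icc (u/3) (v/3), f x ∂P = (1/2) * ∫ x in Set.Icc u v, f (Sm x) ∂P := by
  set g : ℝ → ℝ := (Set.Icc (u/3) (v/3)).indicator f with hg
  have hgmeas : Measurable g := hf.indicator measurableSet_Icc
  have hCnn : 0 ≤ C := le_trans (abs_nonneg _) (hb 0 (by norm_num))
  have hgb : ∀ x ∈ Set.Icc (0:ℝ) 1, |g x| ≤ C := by
    intro x hx
    by_cases hmem : x ∈ Set.Icc (u/3) (v/3)
    · rw [hg, Set.indicator_of_mem hmem]; exact hb x hx
    · rw [hg, Set.indicator_of_notMem hmem]; simpa using hCnn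
  have h0 := T0 hsupp hself hgmeas hgb
  have hS : ∀ x : ℝ, g (Sm x) = (Set.Icc u v).indicator (fun y => f (Sm y)) x := by
    intro x
    have hmem : Sm x ∈ Set.Icc (u/3) (v/3) ↔ x ∈ Set.Icc u v := by
      unfold Sm
      simp only [Set.mem_Icc]
      constructor <;> rintro ⟨h1, h2⟩ <;> constructor <;> linarith
    by_cases hx : x ∈ Set.Icc u v
    · rw [hg, Set.indicator_of_mem (hmem.2 hx), Set.indicator_of_mem hx]
    · rw [hg, Set.indicator_of_notMem (fun h => hx (hmem.1 h)), Set.indicator_of_notMem hx]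
  have hU : ∀ᵐ x ∂P, g (Um x) = 0 := by
    refine (ae_mem_Icc hsupp).mono fun x hx => ?_
    have : Um x ∉ Set.Icc (u/3) (v/3) := by
      intro h
      have h2 := h.2
      have : (2:ℝ)/3 ≤ Um x := by unfold Um; linarith [hx.1]
      linarith
    rw [hg, Set.indicator_of_notMem this]
  have e1 : ∫ x, g x ∂P = ∫ x in Set.Icc (u/3) (v/3), f x ∂P :=
    integral_indicator measurableSet_Icc
  have e2 : ∫ x, g (Sm x) ∂P = ∫ x in Set.Icc u v, f (Sm x) ∂P := by
    rw [show (fun x => g (Sm x)) = (Set.Icc u v).indicator (fun y => f (Sm y)) from funext hS]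
    exact integral_indicator measurableSet_Icc
  have e3 : ∫ x, g (Um x) ∂P = 0 := integral_eq_zero_of_ae hU
  rw [e1, e2, e3] at h0
  rw [h0]
  ring

lemma TU' (hself : SelfSim P) {f : ℝ → ℝ} {C : ℝ} {u v : ℝ} (hu : 0 ≤ u) (hv : v ≤ 1)
    (hf : Measurable f) (hb : ∀ x ∈ Set.Icc (0:ℝ) 1, |f x| ≤ C) :
    ∫ x in Set.Icc ((u+2)/3) ((v+2)/3), f x ∂P = (1/2) * ∫ x in Set.Icc u v, f (Um x) ∂P := by
  set g : ℝ → ℝ := (Set.Icc ((u+2)/3) ((v+2)/3)).indicator f with hg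
  have hgmeas : Measurable g := hf.indicator measurableSet_Icc
  have hCnn : 0 ≤ C := le_trans (abs_nonneg _) (hb 0 (by norm_num))
  have hgb : ∀ x ∈ Set.Icc (0:ℝ) 1, |g x| ≤ C := by
    intro x hx
    by_cases hmem : x ∈ Set.Icc ((u+2)/3) ((v+2)/3)
    · rw [hg, Set.indicator_of_mem hmem]; exact hb x hx
    · rw [hg, Set.indicator_of_notMem hmem]; simpa using hCnn
  have h0 := T0 hsupp hself hgmeas hgb
  have hS : ∀ x : ℝ, g (Um x) = (Set.Icc u v).indicator (fun y => f (Um y)) x := by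
    intro x
    have hmem : Um x ∈ Set.Icc ((u+2)/3) ((v+2)/3) ↔ x ∈ Set.Icc u v := by
      unfold Um
      simp only [Set.mem_Icc]
      constructor <;> rintro ⟨h1, h2⟩ <;> constructor <;> linarith
    by_cases hx : x ∈ Set.Icc u v
    · rw [hg, Set.indicator_of_mem (hmem.2 hx), Set.indicator_of_mem hx]
    · rw [hg, Set.indicator_of_notMem (fun h => hx (hmem.1 h)), Set.indicator_of_notMem hx]
  have hU : ∀ᵐ x ∂P, g (Sm x) = 0 := by
    refine (ae_mem_Icc hsupp).mono fun x hx => ?_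
    have : Sm x ∉ Set.Icc ((u+2)/3) ((v+2)/3) := by
      intro h
      have h1 := h.1
      have : Sm x ≤ 1/3 := by unfold Sm; linarith [hx.2]
      linarith
    rw [hg, Set.indicator_of_notMem this]
  have e1 : ∫ x, g x ∂P = ∫ x in Set.Icc ((u+2)/3) ((v+2)/3), f x ∂P :=
    integral_indicator measurableSet_Icc
  have e2 : ∫ x, g (Um x) ∂P = ∫ x in Set.Icc u v, f (Um x) ∂P := by
    rw [show (fun x => g (Um x)) = (Set.Icc u v).indicator (fun y => f (Um y)) from funext hS]
    exact integral_indicator measurableSet_Icc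
  have e3 : ∫ x, g (Sm x) ∂P = 0 := integral_eq_zero_of_ae hU
  rw [e1, e2, e3] at h0
  rw [h0]
  ring

lemma restrict_full : P.restrict (Set.Icc (0:ℝ) 1) = P :=
  Measure.restrict_eq_self_of_ae_mem (ae_mem_Icc hsupp)

lemma setInt_full (f : ℝ → ℝ) : ∫ x in Set.Icc (0:ℝ) 1, f x ∂P = ∫ x, f x ∂P := by
  rw [restrict_full hsupp]

omit hsupp in
lemma bound_quad (c : ℝ) : ∀ x ∈ Set.Icc (0:ℝ) 1, |(x - c)^2| ≤ (1 + |c|)^2 := by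
  intro x hx
  rw [abs_of_nonneg (sq_nonneg _), ← sq_abs]
  apply pow_le_pow_left₀ (abs_nonneg _)
  calc |x - c| ≤ |x| + |c| := abs_sub _ _
    _ ≤ 1 + |c| := by
        have : |x| ≤ 1 := abs_le.2 ⟨by linarith [hx.1], hx.2⟩
        linarith

omit hsupp in
lemma bound_id : ∀ x ∈ Set.Icc (0:ℝ) 1, |x| ≤ 1 :=
  fun x hx => abs_le.2 ⟨by linarith [hx.1], hx.2⟩

omit hsupp in
lemma bound_sq : ∀ x ∈ Set.Icc (0:ℝ) 1, |x^2| ≤ 1 := by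
  intro x hx
  rw [abs_of_nonneg (sq_nonneg _)]
  nlinarith [hx.1, hx.2]

lemma int_id (hself : SelfSim P) : ∫ x, x ∂P = 1/2 := by
  have hi : Integrable (fun x : ℝ => x) P := integrable_of_bound hsupp measurable_id bound_id
  have h := T0 hsupp hself (f := fun x => x) measurable_id bound_id
  have e1 : ∫ x, Sm x ∂P = (∫ x, x ∂P) * (1/3) := by
    rw [show (fun x => Sm x) = fun x : ℝ => x * (1/3) from funext fun x => by unfold Sm; ring]
    exact integral_mul_const _ _
  have e2 : ∫ x, Um x ∂P = (∫ x, x ∂P) * (1/3) + 2/3 := by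
    rw [show (fun x => Um x) = fun x : ℝ => x * (1/3) + 2/3 from funext fun x => by
      unfold Um; ring]
    rw [integral_add (hi.mul_const _) (integrable_const _), integral_mul_const, integral_const]
    simp
  rw [e1, e2] at h
  linarith

lemma int_sq (hself : SelfSim P) : ∫ x, x^2 ∂P = 3/8 := by
  have hi : Integrable (fun x : ℝ => x) P := integrable_of_bound hsupp measurable_id bound_id
  have hsq : Integrable (fun x : ℝ => x^2) P :=
    integrable_of_bound hsupp (by fun_prop) bound_sq
  have h := T0 hsupp hself (f := fun x => x^2) (by fun_prop) bound_sq
  have e1 : ∫ x, (Sm x)^2 ∂P = (∫ x, x^2 ∂P) * (1/9) := by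
    rw [show (fun x => (Sm x)^2) = fun x : ℝ => x^2 * (1/9) from funext fun x => by
      unfold Sm; ring]
    exact integral_mul_const _ _
  have e2 : ∫ x, (Um x)^2 ∂P = (∫ x, x^2 ∂P) * (1/9) + (∫ x, x ∂P) * (4/9) + 4/9 := by
    rw [show (fun x => (Um x)^2) = fun x : ℝ => (x^2 * (1/9) + x * (4/9)) + 4/9 from
      funext fun x => by unfold Um; ring]
    have k1 : ∫ x, (x^2 * (1/9) + x * (4/9) + (4/9 : ℝ)) ∂P
        = (∫ x, (x^2 * (1/9) + x * (4/9)) ∂P) + ∫ _x, (4/9 : ℝ) ∂P :=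
      integral_add ((hsq.mul_const _).add (hi.mul_const _)) (integrable_const _)
    have k2 : ∫ x, (x^2 * (1/9) + x * (4/9 : ℝ)) ∂P
        = (∫ x, x^2 * (1/9) ∂P) + ∫ x, x * (4/9 : ℝ) ∂P :=
      integral_add (hsq.mul_const _) (hi.mul_const _)
    rw [k1, k2, integral_mul_const, integral_mul_const, integral_const]
    simp
  rw [e1, e2, int_id hsupp hself] at h
  linarith

lemma int_poly (hself : SelfSim P) (a b c : ℝ) :
    ∫ x, (a * x^2 + b * x + c) ∂P = a * (3/8) + b * (1/2) + c := by
  have hi : Integrable (fun x : ℝ => x) P := integrable_of_bound hsupp measurable_id bound_id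
  have hsq : Integrable (fun x : ℝ => x^2) P :=
    integrable_of_bound hsupp (by fun_prop) bound_sq
  have k1 : ∫ x, (a * x^2 + b * x + c) ∂P
      = (∫ x, (a * x^2 + b * x) ∂P) + ∫ _x, (c : ℝ) ∂P :=
    integral_add ((hsq.const_mul a).add (hi.const_mul b)) (integrable_const c)
  have k2 : ∫ x, (a * x^2 + b * x) ∂P = (∫ x, a * x^2 ∂P) + ∫ x, b * x ∂P :=
    integral_add (hsq.const_mul a) (hi.const_mul b)
  have k3 : ∫ x, a * x^2 ∂P = a * ∫ x, x^2 ∂P := integral_const_mul a _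
  have k4 : ∫ x, b * x ∂P = b * ∫ x, x ∂P := integral_const_mul b _
  rw [k1, k2, k3, k4, integral_const, int_id hsupp hself, int_sq hsupp hself]
  simp

lemma E2 (hself : SelfSim P) (c : ℝ) :
    ∫ x in Set.Icc (0:ℝ) (1/3), (x - c)^2 ∂P = (1/2) * ((c - 1/6)^2 + 1/72) := by
  have h := TS' hsupp hself (u := 0) (v := 1) le_rfl le_rfl
    (f := fun x => (x - c)^2) (by fun_prop) (bound_quad c)
  norm_num at h
  rw [setInt_full hsupp] at h
  rw [show (fun x => (Sm x - c)^2) = fun x : ℝ =>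
        (1/9) * x^2 + (-(2*c)/3) * x + c^2 from funext fun x => by unfold Sm; ring,
      int_poly hsupp hself] at h
  rw [h]; ring

lemma ER (hself : SelfSim P) (c : ℝ) :
    ∫ x in Set.Icc (2/3:ℝ) 1, (x - c)^2 ∂P = (1/2) * ((c - 5/6)^2 + 1/72) := by
  have h := TU' hsupp hself (u := 0) (v := 1) le_rfl le_rfl
    (f := fun x => (x - c)^2) (by fun_prop) (bound_quad c)
  norm_num at h
  rw [setInt_full hsupp] at h
  rw [show (fun x => (Um x - c)^2) = fun x : ℝ =>
        (1/9) * x^2 + ((4 - 6*c)/9) * x + (2/3 - c)^2 from funext fun x => by unfold Um; ring,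
      int_poly hsupp hself] at h
  rw [h]; ring

lemma EJ11 (hself : SelfSim P) :
    ∫ x in Set.Icc (0:ℝ) (1/9), (x - 1/18)^2 ∂P = 1/2592 := by
  have h1 := TS' hsupp hself (u := 0) (v := 1/3) (by norm_num) (by norm_num)
    (f := fun x => (x - 1/18)^2) (by fun_prop) (bound_quad _)
  have h2 := TS' hsupp hself (u := 0) (v := 1) le_rfl le_rfl
    (f := fun x => (Sm x - 1/18)^2) (by fun_prop)
    (fun x hx => bound_quad _ _ (Sm_mem hx))
  norm_num at h1 h2
  rw [setInt_full hsupp] at h2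
  rw [show (fun x => (Sm (Sm x) - 1/18)^2) = fun x : ℝ =>
        (1/81) * x^2 + (-(1/81)) * x + (1/18)^2 from funext fun x => by unfold Sm; ring,
      int_poly hsupp hself] at h2
  rw [h1, h2]; ring

lemma EJ12 (hself : SelfSim P) :
    ∫ x in Set.Icc (2/9:ℝ) (1/3), (x - 5/18)^2 ∂P = 1/2592 := by
  have h1 := TS' hsupp hself (u := 2/3) (v := 1) (by norm_num) (by norm_num)
    (f := fun x => (x - 5/18)^2) (by fun_prop) (bound_quad _)
  have h2 := TU' hsupp hself (u := 0) (v := 1) le_rfl le_rfl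
    (f := fun x => (Sm x - 5/18)^2) (by fun_prop)
    (fun x hx => bound_quad _ _ (Sm_mem hx))
  norm_num at h1 h2
  rw [setInt_full hsupp] at h2
  rw [show (fun x => (Sm (Um x) - 5/18)^2) = fun x : ℝ =>
        (1/81) * x^2 + (-(1/81)) * x + (1/18)^2 from funext fun x => by unfold Sm Um; ring,
      int_poly hsupp hself] at h2
  rw [h1, h2]; ring

lemma EJ21 (hself : SelfSim P) :
    ∫ x in Set.Icc (2/3:ℝ) (7/9), (x - 13/18)^2 ∂P = 1/2592 := by
  have h1 := TU' hsupp hself (u := 0) (v := 1/3) (by norm_num) (by norm_num)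
    (f := fun x => (x - 13/18)^2) (by fun_prop) (bound_quad _)
  have h2 := TS' hsupp hself (u := 0) (v := 1) le_rfl le_rfl
    (f := fun x => (Um x - 13/18)^2) (by fun_prop)
    (fun x hx => bound_quad _ _ (Um_mem hx))
  norm_num at h1 h2
  rw [setInt_full hsupp] at h2
  rw [show (fun x => (Um (Sm x) - 13/18)^2) = fun x : ℝ =>
        (1/81) * x^2 + (-(1/81)) * x + (1/18)^2 from funext fun x => by unfold Sm Um; ring,
      int_poly hsupp hself] at h2
  rw [h1, h2]; ring

lemma EJ22 (hself : SelfSim P) :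
    ∫ x in Set.Icc (8/9:ℝ) 1, (x - 17/18)^2 ∂P = 1/2592 := by
  have h1 := TU' hsupp hself (u := 2/3) (v := 1) (by norm_num) (by norm_num)
    (f := fun x => (x - 17/18)^2) (by fun_prop) (bound_quad _)
  have h2 := TU' hsupp hself (u := 0) (v := 1) le_rfl le_rfl
    (f := fun x => (Um x - 17/18)^2) (by fun_prop)
    (fun x hx => bound_quad _ _ (Um_mem hx))
  norm_num at h1 h2
  rw [setInt_full hsupp] at h2
  rw [show (fun x => (Um (Um x) - 17/18)^2) = fun x : ℝ =>
        (1/81) * x^2 + (-(1/81)) * x + (1/18)^2 from funext fun x => by unfold Um; ring,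
      int_poly hsupp hself] at h2
  rw [h1, h2]; ring

omit hsupp in
lemma err_eq (A : Set ℝ) : err P A = ∫ x, dfun A x ∂P := rfl

lemma integrable_dfun {A : Set ℝ} (hfin : A.Finite) (hne : A.Nonempty) :
    Integrable (dfun A) P := by
  obtain ⟨a₀, ha₀⟩ := hne
  exact integrable_of_bound hsupp (measurable_dfun hfin) (fun x hx => dfun_bound ha₀ hx)

omit hsupp in
lemma err_nonneg (A : Set ℝ) : 0 ≤ err P A :=
  integral_nonneg (fun x => dfun_nonneg A x)

omit hsupp in
lemma quantErr_le {A : Set ℝ} {n : ℕ} (hfin : A.Finite) (hne : A.Nonempty)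
    (hcard : A.ncard ≤ n) : quantErr P n ≤ err P A := by
  apply csInf_le
  · refine ⟨0, fun v hv => ?_⟩
    obtain ⟨B, _, _, _, rfl⟩ := hv
    exact err_nonneg B
  · exact ⟨A, hfin, hne, hcard, rfl⟩

lemma integral_lt {f g : ℝ → ℝ} (hfg : ∀ᵐ x ∂P, g x ≤ f x)
    (hset : P {x | g x < f x} ≠ 0) (hf : Integrable f P) (hg : Integrable g P) :
    ∫ x, g x ∂P < ∫ x, f x ∂P := by
  have hpos : 0 < ∫ x, (f x - g x) ∂P := by
    refine (integral_pos_iff_support_of_nonneg_ae ?_ (hf.sub hg)).2 ?_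
    · exact hfg.mono fun x hx => by simpa using sub_nonneg.2 hx
    · refine lt_of_lt_of_le (pos_iff_ne_zero.2 hset) (measure_mono (fun x hx => ?_))
      simp only [Function.mem_support]
      intro h
      have hfx : f x = g x := by
        have := sub_eq_zero.1 h
        linarith
      simp only [Set.mem_setOf_eq, hfx, lt_irrefl] at hx
  rw [integral_sub hf hg] at hpos
  linarith

lemma exists_better (hself : SelfSim P) {A : Set ℝ} (hfin : A.Finite) (hne : A.Nonempty) :
    ∃ b : ℝ, err P (insert b A) < err P A := by
  haveI : NoAtoms P := ⟨atom_zero hsupp hself⟩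
  have hA0 : P A = 0 := Pfin_null hsupp hself hfin
  set u : ℕ → Set ℝ := fun m => ⋃ a ∈ A, Metric.ball a (1/(m+1)) with hu
  have humeas : ∀ m, MeasurableSet (u m) :=
    fun m => MeasurableSet.biUnion hfin.countable (fun a _ => measurableSet_ball)
  have hanti : Antitone u := by
    intro m m' hmm
    refine Set.iUnion₂_mono fun a _ => Metric.ball_subset_ball ?_
    have h1 : (0:ℝ) < m + 1 := by positivity
    have h2 : (m:ℝ) + 1 ≤ (m':ℝ) + 1 := by
      have := Nat.cast_le (α := ℝ).2 hmm
      linarith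
    exact one_div_le_one_div_of_le h1 h2
  have hiInter : ⋂ m, u m = A := by
    ext x
    simp only [Set.mem_iInter]
    constructor
    · intro h
      by_contra hx
      have hop : IsOpen Aᶜ := hfin.isClosed.isOpen_compl
      obtain ⟨ε, hε, hball⟩ := Metric.isOpen_iff.1 hop x hx
      obtain ⟨m, hm⟩ := exists_nat_one_div_lt hε
      obtain ⟨a, ha, hd⟩ := by
        have := h m
        simpa only [hu, Set.mem_iUnion, Metric.mem_ball, exists_prop] using this
      have : a ∈ Metric.ball x ε := by
        rw [Metric.mem_ball, dist_comm]
        calc dist x a < 1/(m+1) := hd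
          _ < ε := by exact_mod_cast hm
      exact (hball this) ha
    · intro hx m
      refine Set.mem_biUnion hx ?_
      simp only [Metric.mem_ball, dist_self]
      positivity
  have htend : Filter.Tendsto (P ∘ u) Filter.atTop (nhds 0) := by
    have := tendsto_measure_iInter_atTop (μ := P)
      (fun m => (humeas m).nullMeasurableSet) hanti ⟨0, measure_ne_top _ _⟩
    rwa [hiInter, hA0] at this
  obtain ⟨m, hm⟩ := (htend.eventually_lt_const (by norm_num : (0:ℝ≥0∞) < 1)).exists
  set δ : ℝ := 1/(m+1) with hδ
  have hδpos : 0 < δ := by positivity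
  have hV : P (Set.Icc 0 1 \ u m) ≠ 0 := by
    intro h0
    have hsub : Set.Icc (0:ℝ) 1 ⊆ (Set.Icc 0 1 \ u m) ∪ u m := by
      intro x hx
      by_cases hxu : x ∈ u m
      · exact Or.inr hxu
      · exact Or.inl ⟨hx, hxu⟩
    have h1 : P (Set.Icc 0 1) ≤ P ((Set.Icc 0 1 \ u m) ∪ u m) := measure_mono hsub
    have h2 : P ((Set.Icc 0 1 \ u m) ∪ u m) ≤ P (Set.Icc 0 1 \ u m) + P (u m) :=
      measure_union_le _ _
    rw [h0, zero_add] at h2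
    rw [hsupp] at h1
    exact absurd (lt_of_le_of_lt (h1.trans h2) hm) (lt_irrefl _)
  obtain ⟨K, hK⟩ := exists_nat_gt (4/δ)
  have hcover : (Set.Icc 0 1 \ u m) ⊆
      ⋃ i ∈ Finset.range (K+1), Set.Icc ((i:ℝ)*δ/4) ((i+1:ℝ)*δ/4) := by
    intro x hx
    have hx0 : (0:ℝ) ≤ x := hx.1.1
    have hx1 : x ≤ 1 := hx.1.2
    have hxd : 0 ≤ x/(δ/4) := by positivity
    set i := Nat.floor (x/(δ/4)) with hi
    have hfl : (i:ℝ) ≤ x/(δ/4) := Nat.floor_le hxd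
    have hfu : x/(δ/4) < i + 1 := Nat.lt_floor_add_one _
    have hiK : i < K + 1 := by
      have : (i:ℝ) ≤ 4/δ := by
        refine hfl.trans ?_
        rw [div_le_div_iff₀ (by positivity) hδpos]
        nlinarith
      have : (i:ℝ) < K := lt_of_le_of_lt this hK
      exact_mod_cast Nat.lt_add_one_of_lt (by exact_mod_cast this)
    refine Set.mem_biUnion (Finset.mem_range.2 hiK) ?_
    constructor
    · calc (i:ℝ)*δ/4 = (i:ℝ)*(δ/4) := by ring
        _ ≤ x := by
          rw [← le_div_iff₀ (by positivity)]
          exact hfl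
    · calc x = (x/(δ/4))*(δ/4) := by field_simp
        _ ≤ (i+1)*(δ/4) := by
          apply mul_le_mul_of_nonneg_right (le_of_lt hfu) (by positivity)
        _ = (i+1:ℝ)*δ/4 := by ring
  have hex : ∃ i ∈ Finset.range (K+1),
      P ((Set.Icc 0 1 \ u m) ∩ Set.Icc ((i:ℝ)*δ/4) ((i+1:ℝ)*δ/4)) ≠ 0 := by
    by_contra hall
    push_neg at hall
    have : P (Set.Icc 0 1 \ u m) = 0 := by
      have h1 : (Set.Icc 0 1 \ u m) ⊆
          ⋃ i ∈ Finset.range (K+1),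
            ((Set.Icc 0 1 \ u m) ∩ Set.Icc ((i:ℝ)*δ/4) ((i+1:ℝ)*δ/4)) := by
        intro x hx
        obtain ⟨i, hi, hxi⟩ := by
          have := hcover hx
          simpa only [Set.mem_iUnion, exists_prop] using this
        exact Set.mem_biUnion hi ⟨hx, hxi⟩
      refine le_antisymm ?_ zero_le
      refine (measure_mono h1).trans ?_
      refine (measure_biUnion_finset_le _ _).trans ?_
      simp only [Finset.sum_congr rfl (fun i hi => hall i hi), Finset.sum_const_zero, le_refl]
    exact hV this
  obtain ⟨i, _, hPi⟩ := hex
  refine ⟨(i:ℝ)*δ/4 + δ/8, ?_⟩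
  set b := (i:ℝ)*δ/4 + δ/8 with hb
  set T := (Set.Icc 0 1 \ u m) ∩ Set.Icc ((i:ℝ)*δ/4) ((i+1:ℝ)*δ/4) with hT
  have hstrict : ∀ x ∈ T, dfun (insert b A) x < dfun A x := by
    rintro x ⟨⟨hx01, hxu⟩, hxI⟩
    have hdA : δ^2 ≤ dfun A x := by
      refine le_dfun hne fun a ha => ?_
      have : x ∉ Metric.ball a δ := fun hmem => hxu (Set.mem_biUnion ha hmem)
      rw [Metric.mem_ball, Real.dist_eq, not_lt] at this
      calc δ^2 ≤ |x - a|^2 := by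
            apply pow_le_pow_left₀ (le_of_lt hδpos) this
        _ = (x - a)^2 := sq_abs _
    have hdb : (x - b)^2 ≤ (δ/8)^2 := by
      have h1 : |x - b| ≤ δ/8 := by
        rw [abs_le]
        obtain ⟨hl, hr⟩ := hxI
        constructor <;> [skip; skip] <;> rw [hb] <;> nlinarith
      calc (x - b)^2 = |x - b|^2 := (sq_abs _).symm
        _ ≤ (δ/8)^2 := pow_le_pow_left₀ (abs_nonneg _) h1 2
    calc dfun (insert b A) x ≤ (x - b)^2 := dfun_le (Set.mem_insert b A) x
      _ ≤ (δ/8)^2 := hdb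
      _ < δ^2 := by nlinarith
      _ ≤ dfun A x := hdA
  have hle : ∀ x, dfun (insert b A) x ≤ dfun A x :=
    fun x => dfun_anti (Set.subset_insert b A) hne x
  rw [err_eq, err_eq]
  refine integral_lt hsupp (Filter.Eventually.of_forall hle) ?_
    (integrable_dfun hsupp hfin hne)
    (integrable_dfun hsupp (hfin.insert b) ⟨b, Set.mem_insert b A⟩)
  intro h0
  refine hPi (le_antisymm ?_ zero_le)
  rw [← h0]
  exact measure_mono (fun x hx => hstrict x hx)

lemma opt_clamp (hself : SelfSim P) {n : ℕ} {α : Set ℝ} (hfin : α.Finite) (hne : α.Nonempty)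
    (hcard : α.ncard ≤ n) (heq : err P α = quantErr P n) {a : ℝ} (ha : a ∈ α) (b : ℝ)
    (hstrict : ∀ x ∈ Set.Icc (0:ℝ) 1, (x - b)^2 < (x - a)^2) : False := by
  set W := {x : ℝ | x ∈ Set.Icc (0:ℝ) 1 ∧ dfun α x = (x - a)^2} with hW
  have hcard' : (insert b (α \ {a})).ncard ≤ n := by
    calc (insert b (α \ {a})).ncard ≤ (α \ {a}).ncard + 1 := Set.ncard_insert_le _ _
      _ = α.ncard := Set.ncard_diff_singleton_add_one ha hfin
      _ ≤ n := hcard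
  by_cases hPW : P W = 0
  · -- a is useless; remove it and improve
    have hne' : (α \ {a}).Nonempty := by
      rcases Set.eq_singleton_or_nontrivial ha with hsing | hnt
      · exfalso
        have hWeq : W = Set.Icc (0:ℝ) 1 := by
          ext x
          simp only [hW, Set.mem_setOf_eq]
          refine ⟨fun h => h.1, fun h => ⟨h, ?_⟩⟩
          rw [hsing]
          exact dfun_singleton a x
        rw [hWeq, hsupp] at hPW
        exact one_ne_zero hPW
      · obtain ⟨c, hc, hca⟩ := hnt.exists_ne a
        exact ⟨c, hc, hca⟩
    have haeeq : dfun (α \ {a}) =ᵐ[P] dfun α := by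
      have hnull : P (W ∪ (Set.Icc (0:ℝ) 1)ᶜ) = 0 := by
        have h1 : P (W ∪ (Set.Icc (0:ℝ) 1)ᶜ) ≤ P W + P (Set.Icc (0:ℝ) 1)ᶜ :=
          measure_union_le _ _
        rw [hPW, Pcompl hsupp, add_zero] at h1
        exact le_antisymm h1 zero_le
      rw [Filter.EventuallyEq, ae_iff]
      refine measure_mono_null (fun x hx => ?_) hnull
      simp only [Set.mem_setOf_eq] at hx
      by_contra hxmem
      simp only [Set.mem_union, Set.mem_compl_iff, not_or, not_not] at hxmem
      obtain ⟨hxW, hx01⟩ := hxmem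
      apply hx
      obtain ⟨c, hc, hceq⟩ := dfun_exists hfin hne x
      have hca : c ≠ a := by
        intro hca
        exact hxW ⟨hx01, by rw [hceq, hca]⟩
      refine le_antisymm ?_ (dfun_anti Set.diff_subset hne' x)
      rw [hceq]
      exact dfun_le (Set.mem_diff_singleton.2 ⟨hc, hca⟩) x
    have herr : err P (α \ {a}) = err P α := integral_congr_ae haeeq
    obtain ⟨b', hb'⟩ := exists_better hsupp hself hfin.diff hne'
    have hq : quantErr P n ≤ err P (insert b' (α \ {a})) := by
      refine quantErr_le (hfin.diff.insert b') ⟨b', Set.mem_insert _ _⟩ ?_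
      calc (insert b' (α \ {a})).ncard ≤ (α \ {a}).ncard + 1 := Set.ncard_insert_le _ _
        _ = α.ncard := Set.ncard_diff_singleton_add_one ha hfin
        _ ≤ n := hcard
    rw [herr, heq] at hb'
    exact absurd (lt_of_le_of_lt hq hb') (lt_irrefl _)
  · -- replace a by b
    have hlt : ∀ x ∈ Set.Icc (0:ℝ) 1, dfun (insert b (α \ {a})) x ≤ dfun α x := by
      intro x hx
      obtain ⟨c, hc, hceq⟩ := dfun_exists hfin hne x
      by_cases hca : c = a
      · calc dfun (insert b (α \ {a})) x ≤ (x - b)^2 := dfun_le (Set.mem_insert _ _) x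
          _ ≤ (x - a)^2 := le_of_lt (hstrict x hx)
          _ = dfun α x := by rw [hceq, hca]
      · calc dfun (insert b (α \ {a})) x ≤ (x - c)^2 :=
              dfun_le (Set.mem_insert_of_mem _ (Set.mem_diff_singleton.2 ⟨hc, hca⟩)) x
          _ = dfun α x := hceq.symm
    have hltW : ∀ x ∈ W, dfun (insert b (α \ {a})) x < dfun α x := by
      rintro x ⟨hx01, hxeq⟩
      calc dfun (insert b (α \ {a})) x ≤ (x - b)^2 := dfun_le (Set.mem_insert _ _) x
        _ < (x - a)^2 := hstrict x hx01
        _ = dfun α x := hxeq.symm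
    have hint1 := integrable_dfun hsupp hfin hne
    have hint2 : Integrable (dfun (insert b (α \ {a}))) P :=
      integrable_dfun hsupp (hfin.diff.insert b) ⟨b, Set.mem_insert _ _⟩
    have hbetter : err P (insert b (α \ {a})) < err P α := by
      rw [err_eq, err_eq]
      refine integral_lt hsupp ((ae_mem_Icc hsupp).mono fun x hx => hlt x hx) ?_ hint1 hint2
      intro h0
      refine hPW (le_antisymm ?_ zero_le)
      rw [← h0]
      exact measure_mono (fun x hx => hltW x hx)
    have hq : quantErr P n ≤ err P (insert b (α \ {a})) :=
      quantErr_le (hfin.diff.insert b) ⟨b, Set.mem_insert _ _⟩ hcard'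
    rw [heq] at hbetter
    exact absurd (lt_of_le_of_lt hq hbetter) (lt_irrefl _)

lemma opt_subset (hself : SelfSim P) {n : ℕ} {α : Set ℝ} (hfin : α.Finite) (hne : α.Nonempty)
    (hcard : α.ncard ≤ n) (heq : err P α = quantErr P n) :
    ∀ a ∈ α, a ∈ Set.Icc (0:ℝ) 1 := by
  intro a ha
  by_contra hmem
  rw [Set.mem_Icc, not_and_or, not_le, not_le] at hmem
  rcases hmem with hlt | hgt
  · refine opt_clamp hsupp hself hfin hne hcard heq ha 0 (fun x hx => ?_)
    nlinarith [hx.1, hx.2]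
  · refine opt_clamp hsupp hself hfin hne hcard heq ha 1 (fun x hx => ?_)
    nlinarith [hx.1, hx.2]

omit hsupp in
lemma min_nonneg' (a b : ℝ) (ha : 0 ≤ a) (hb : 0 ≤ b) : 0 ≤ min a b := le_min ha hb

lemma Gmain (hself : SelfSim P) {c : ℝ} (hc : c ∈ Set.Icc (0:ℝ) 1) :
    1/36 ≤ ∫ x, min ((x - c)^2) ((1 - x)^2) ∂P := by
  obtain ⟨hc0, hc1⟩ := hc
  set f : ℝ → ℝ := fun x => min ((x - c)^2) ((1 - x)^2) with hfdef
  have hfmeas : Measurable f := Measurable.min (by fun_prop) (by fun_prop)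
  have hfnn : ∀ x, 0 ≤ f x := fun x => le_min (sq_nonneg _) (sq_nonneg _)
  have hfb : ∀ x ∈ Set.Icc (0:ℝ) 1, |f x| ≤ (1+|c|)^2 := by
    intro x hx
    rw [abs_of_nonneg (hfnn x)]
    refine (min_le_left _ _).trans ?_
    have := bound_quad c x hx
    rwa [abs_of_nonneg (sq_nonneg _)] at this
  have hint : Integrable f P := integrable_of_bound hsupp hfmeas hfb
  have hsplit : ∫ x in Set.Icc (0:ℝ) (1/3), f x ∂P + ∫ x in Set.Icc (2/3:ℝ) 1, f x ∂P
      ≤ ∫ x, f x ∂P := by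
    have hdisj : Disjoint (Set.Icc (0:ℝ) (1/3)) (Set.Icc (2/3:ℝ) 1) := by
      rw [Set.disjoint_left]
      intro x h1 h2
      have := h1.2; have := h2.1; linarith
    rw [← setIntegral_union hdisj measurableSet_Icc hint.integrableOn hint.integrableOn]
    exact setIntegral_le_integral hint (Filter.Eventually.of_forall hfnn)
  have hrnn : 0 ≤ ∫ x in Set.Icc (2/3:ℝ) 1, f x ∂P :=
    setIntegral_nonneg measurableSet_Icc (fun x _ => hfnn x)
  have hleft_exact : c ≤ 2/3 → ∫ x in Set.Icc (0:ℝ) (1/3), f x ∂P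
      = (1/2)*((c - 1/6)^2 + 1/72) := by
    intro hc23
    have he : ∫ x in Set.Icc (0:ℝ) (1/3), f x ∂P
        = ∫ x in Set.Icc (0:ℝ) (1/3), (x - c)^2 ∂P := by
      refine setIntegral_congr_fun measurableSet_Icc (fun x hx => ?_)
      refine min_eq_left ?_
      have hm : (0:ℝ) ≤ (1 + c - 2*x)*(1 - c) :=
        mul_nonneg (by linarith [hx.2] : (0:ℝ) ≤ 1 + c - 2*x) (by linarith : (0:ℝ) ≤ 1 - c)
      nlinarith [hm]
    rw [he, E2 hsupp hself c]
  rcases le_or_gt c (1/3) with h13 | h13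
  · -- case A
    have hre : ∫ x in Set.Icc (2/3:ℝ) 1, f x ∂P = (1/2)*((1 - 5/6)^2 + 1/72) := by
      have he : ∫ x in Set.Icc (2/3:ℝ) 1, f x ∂P
          = ∫ x in Set.Icc (2/3:ℝ) 1, (x - 1)^2 ∂P := by
        refine setIntegral_congr_fun measurableSet_Icc (fun x hx => ?_)
        have hm : (0:ℝ) ≤ (2*x - c - 1)*(1 - c) :=
          mul_nonneg (by linarith [hx.1] : (0:ℝ) ≤ 2*x - c - 1) (by linarith : (0:ℝ) ≤ 1 - c)
        have := min_eq_right (by nlinarith [hm] : (1 - x)^2 ≤ (x - c)^2)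
        rw [hfdef]
        dsimp only
        rw [this]
        ring
      rw [he, ER hsupp hself 1]
    rw [hleft_exact (by linarith)] at hsplit
    rw [hre] at hsplit
    nlinarith [sq_nonneg (c - 1/6)]
  · rcases le_or_gt c (4/9) with h49 | h49
    · -- case B
      have hJ : (1:ℝ)/81 ≤ ∫ x in Set.Icc (2/3:ℝ) 1, f x ∂P := by
        have h1 : ∫ x in Set.Icc (2/3:ℝ) (7/9), f x ∂P ≤ ∫ x in Set.Icc (2/3:ℝ) 1, f x ∂P := by
          refine setIntegral_mono_set hint.integrableOn
            (Filter.Eventually.of_forall hfnn) ?_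
          refine Filter.Eventually.of_forall ?_
          exact fun x hx => ⟨hx.1, by linarith [hx.2]⟩
        have h2 : ∫ x in Set.Icc (2/3:ℝ) (7/9), (4/81 : ℝ) ∂P
            ≤ ∫ x in Set.Icc (2/3:ℝ) (7/9), f x ∂P := by
          refine setIntegral_mono_on (integrableOn_const)
            hint.integrableOn measurableSet_Icc (fun x hx => ?_)
          refine le_min ?_ ?_
          · nlinarith [hx.1]
          · nlinarith [hx.2]
        have h3 : ∫ x in Set.Icc (2/3:ℝ) (7/9), (4/81 : ℝ) ∂P = 1/81 := by
          rw [setIntegral_const, measureReal_def, mass_J21 hsupp hself]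
          norm_num [ENNReal.toReal_inv]
        linarith
      rw [hleft_exact (by linarith)] at hsplit
      have hsq : (1:ℝ)/36 ≤ (c - 1/6)^2 := by nlinarith
      linarith
    · rcases le_or_gt c (2/3) with h23 | h23
      · -- case C
        rw [hleft_exact h23] at hsplit
        have hsq : (25:ℝ)/324 ≤ (c - 1/6)^2 := by nlinarith
        linarith
      · -- case D
        have hL : (1:ℝ)/18 ≤ ∫ x in Set.Icc (0:ℝ) (1/3), f x ∂P := by
          have h2 : ∫ x in Set.Icc (0:ℝ) (1/3), (1/9 : ℝ) ∂P
              ≤ ∫ x in Set.Icc (0:ℝ) (1/3), f x ∂P := by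
            refine setIntegral_mono_on (integrableOn_const)
              hint.integrableOn measurableSet_Icc (fun x hx => ?_)
            refine le_min ?_ ?_
            · nlinarith [hx.2]
            · nlinarith [hx.2]
          have h3 : ∫ x in Set.Icc (0:ℝ) (1/3), (1/9 : ℝ) ∂P = 1/18 := by
            rw [setIntegral_const, measureReal_def, mass_left hsupp hself]
            norm_num [ENNReal.toReal_inv]
          linarith
        linarith

lemma Gtilde (hself : SelfSim P) {c : ℝ} (hc : c ∈ Set.Icc (0:ℝ) 1) :
    1/36 ≤ ∫ x, min ((x - c)^2) (x^2) ∂P := by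
  obtain ⟨hc0, hc1⟩ := hc
  set f : ℝ → ℝ := fun x => min ((x - c)^2) (x^2) with hfdef
  have hfmeas : Measurable f := Measurable.min (by fun_prop) (by fun_prop)
  have hfnn : ∀ x, 0 ≤ f x := fun x => le_min (sq_nonneg _) (sq_nonneg _)
  have hfb : ∀ x ∈ Set.Icc (0:ℝ) 1, |f x| ≤ (1+|c|)^2 := by
    intro x hx
    rw [abs_of_nonneg (hfnn x)]
    refine (min_le_left _ _).trans ?_
    have := bound_quad c x hx
    rwa [abs_of_nonneg (sq_nonneg _)] at this
  have hint : Integrable f P := integrable_of_bound hsupp hfmeas hfb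
  have hsplit : ∫ x in Set.Icc (0:ℝ) (1/3), f x ∂P + ∫ x in Set.Icc (2/3:ℝ) 1, f x ∂P
      ≤ ∫ x, f x ∂P := by
    have hdisj : Disjoint (Set.Icc (0:ℝ) (1/3)) (Set.Icc (2/3:ℝ) 1) := by
      rw [Set.disjoint_left]
      intro x h1 h2
      have := h1.2; have := h2.1; linarith
    rw [← setIntegral_union hdisj measurableSet_Icc hint.integrableOn hint.integrableOn]
    exact setIntegral_le_integral hint (Filter.Eventually.of_forall hfnn)
  have hlnn : 0 ≤ ∫ x in Set.Icc (0:ℝ) (1/3), f x ∂P :=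
    setIntegral_nonneg measurableSet_Icc (fun x _ => hfnn x)
  have hright_exact : 1/3 ≤ c → ∫ x in Set.Icc (2/3:ℝ) 1, f x ∂P
      = (1/2)*((c - 5/6)^2 + 1/72) := by
    intro hc13
    have he : ∫ x in Set.Icc (2/3:ℝ) 1, f x ∂P
        = ∫ x in Set.Icc (2/3:ℝ) 1, (x - c)^2 ∂P := by
      refine setIntegral_congr_fun measurableSet_Icc (fun x hx => ?_)
      refine min_eq_left ?_
      have hm : (0:ℝ) ≤ c*(2*x - c) :=
        mul_nonneg (by linarith : (0:ℝ) ≤ c) (by linarith [hx.1] : (0:ℝ) ≤ 2*x - c)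
      nlinarith [hm]
    rw [he, ER hsupp hself c]
  rcases le_or_gt (2/3) c with h23 | h23
  · -- mirror case A : c ∈ [2/3, 1]
    have hle : ∫ x in Set.Icc (0:ℝ) (1/3), f x ∂P
        = ∫ x in Set.Icc (0:ℝ) (1/3), (x - 0)^2 ∂P := by
      refine setIntegral_congr_fun measurableSet_Icc (fun x hx => ?_)
      have hm : (0:ℝ) ≤ c*(c - 2*x) :=
        mul_nonneg (by linarith : (0:ℝ) ≤ c) (by linarith [hx.2] : (0:ℝ) ≤ c - 2*x)
      have := min_eq_right (by nlinarith [hm] : x^2 ≤ (x - c)^2)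
      rw [hfdef]
      dsimp only
      rw [this]
      ring
    rw [hle, E2 hsupp hself 0, hright_exact (by linarith)] at hsplit
    nlinarith [sq_nonneg (c - 5/6)]
  · rcases le_or_gt (5/9) c with h59 | h59
    · -- mirror case B : c ∈ [5/9, 2/3)
      have hJ : (1:ℝ)/81 ≤ ∫ x in Set.Icc (0:ℝ) (1/3), f x ∂P := by
        have h1 : ∫ x in Set.Icc (2/9:ℝ) (1/3), f x ∂P ≤ ∫ x in Set.Icc (0:ℝ) (1/3), f x ∂P := by
          refine setIntegral_mono_set hint.integrableOn
            (Filter.Eventually.of_forall hfnn) ?_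
          refine Filter.Eventually.of_forall ?_
          exact fun x hx => ⟨by linarith [hx.1], hx.2⟩
        have h2 : ∫ x in Set.Icc (2/9:ℝ) (1/3), (4/81 : ℝ) ∂P
            ≤ ∫ x in Set.Icc (2/9:ℝ) (1/3), f x ∂P := by
          refine setIntegral_mono_on (integrableOn_const)
            hint.integrableOn measurableSet_Icc (fun x hx => ?_)
          refine le_min ?_ ?_
          · nlinarith [hx.2]
          · nlinarith [hx.1]
        have h3 : ∫ x in Set.Icc (2/9:ℝ) (1/3), (4/81 : ℝ) ∂P = 1/81 := by
          rw [setIntegral_const, measureReal_def, mass_J12 hsupp hself]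
          norm_num [ENNReal.toReal_inv]
        linarith
      rw [hright_exact (by linarith)] at hsplit
      have hsq : (1:ℝ)/36 ≤ (c - 5/6)^2 := by nlinarith
      linarith
    · rcases le_or_gt (1/3) c with h13 | h13
      · -- mirror case C : c ∈ [1/3, 5/9)
        rw [hright_exact h13] at hsplit
        have hsq : (25:ℝ)/324 ≤ (c - 5/6)^2 := by nlinarith
        linarith
      · -- mirror case D : c ∈ [0, 1/3)
        have hR : (1:ℝ)/18 ≤ ∫ x in Set.Icc (2/3:ℝ) 1, f x ∂P := by
          have h2 : ∫ x in Set.Icc (2/3:ℝ) 1, (1/9 : ℝ) ∂P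
              ≤ ∫ x in Set.Icc (2/3:ℝ) 1, f x ∂P := by
            refine setIntegral_mono_on (integrableOn_const)
              hint.integrableOn measurableSet_Icc (fun x hx => ?_)
            refine le_min ?_ ?_
            · nlinarith [hx.1]
            · nlinarith [hx.1]
          have h3 : ∫ x in Set.Icc (2/3:ℝ) 1, (1/9 : ℝ) ∂P = 1/18 := by
            rw [setIntegral_const, measureReal_def, mass_right hsupp hself]
            norm_num [ENNReal.toReal_inv]
          linarith
        linarith

lemma LBound (hself : SelfSim P) {c : ℝ} (hc : c ∈ Set.Icc (0:ℝ) (1/3)) :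
    1/648 ≤ ∫ x in Set.Icc (0:ℝ) (1/3), min ((x - c)^2) ((1/3 - x)^2) ∂P := by
  set f : ℝ → ℝ := fun x => min ((x - c)^2) ((1/3 - x)^2) with hfdef
  have hfmeas : Measurable f := Measurable.min (by fun_prop) (by fun_prop)
  have hfnn : ∀ x, 0 ≤ f x := fun x => le_min (sq_nonneg _) (sq_nonneg _)
  have hfb : ∀ x ∈ Set.Icc (0:ℝ) 1, |f x| ≤ (1+|c|)^2 := by
    intro x hx
    rw [abs_of_nonneg (hfnn x)]
    refine (min_le_left _ _).trans ?_
    have := bound_quad c x hx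
    rwa [abs_of_nonneg (sq_nonneg _)] at this
  have h := TS' hsupp hself (u := 0) (v := 1) le_rfl le_rfl hfmeas hfb
  norm_num at h
  rw [setInt_full hsupp] at h
  have heq : (fun x => f (Sm x)) = fun x => (1/9) * min ((x - 3*c)^2) ((1 - x)^2) := by
    funext x
    rw [hfdef]
    dsimp only
    unfold Sm
    rw [show (x/3 - c)^2 = (x - 3*c)^2/9 from by ring,
        show (1/3 - x/3)^2 = (1 - x)^2/9 from by ring,
        min_div_div_right (by norm_num : (0:ℝ) ≤ 9)]
    ring
  rw [heq, integral_const_mul] at h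
  have hG := Gmain hsupp hself (c := 3*c) ⟨by linarith [hc.1], by linarith [hc.2]⟩
  rw [h]
  linarith

lemma RBound (hself : SelfSim P) {c : ℝ} (hc : c ∈ Set.Icc (2/3:ℝ) 1) :
    1/648 ≤ ∫ x in Set.Icc (2/3:ℝ) 1, min ((x - c)^2) ((x - 2/3)^2) ∂P := by
  set f : ℝ → ℝ := fun x => min ((x - c)^2) ((x - 2/3)^2) with hfdef
  have hfmeas : Measurable f := Measurable.min (by fun_prop) (by fun_prop)
  have hfnn : ∀ x, 0 ≤ f x := fun x => le_min (sq_nonneg _) (sq_nonneg _)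
  have hfb : ∀ x ∈ Set.Icc (0:ℝ) 1, |f x| ≤ (1+|c|)^2 := by
    intro x hx
    rw [abs_of_nonneg (hfnn x)]
    refine (min_le_left _ _).trans ?_
    have := bound_quad c x hx
    rwa [abs_of_nonneg (sq_nonneg _)] at this
  have h := TU' hsupp hself (u := 0) (v := 1) le_rfl le_rfl hfmeas hfb
  norm_num at h
  rw [setInt_full hsupp] at h
  have heq : (fun x => f (Um x)) = fun x => (1/9) * min ((x - (3*c - 2))^2) (x^2) := by
    funext x
    rw [hfdef]
    dsimp only
    unfold Um
    rw [show (x/3 + 2/3 - c)^2 = (x - (3*c - 2))^2/9 from by ring,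
        show (x/3 + 2/3 - 2/3)^2 = x^2/9 from by ring,
        min_div_div_right (by norm_num : (0:ℝ) ≤ 9)]
    ring
  rw [heq, integral_const_mul] at h
  have hG := Gtilde hsupp hself (c := 3*c - 2) ⟨by linarith [hc.1], by linarith [hc.2]⟩
  rw [h]
  linarith

lemma side_pos (hself : SelfSim P) {A : Set ℝ} (hfin : A.Finite) (hne : A.Nonempty)
    {s : Set ℝ} (hmeas : MeasurableSet s) (hs : P s ≠ 0) :
    0 < ∫ x in s, dfun A x ∂P := by
  haveI : NoAtoms P := ⟨atom_zero hsupp hself⟩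
  have hint : IntegrableOn (dfun A) s P := (integrable_dfun hsupp hfin hne).integrableOn
  rw [integral_pos_iff_support_of_nonneg_ae
    (Filter.Eventually.of_forall (fun x => dfun_nonneg A x)) hint]
  have hsupport : MeasurableSet (Function.support (dfun A)) := by
    have : Function.support (dfun A) = (dfun A) ⁻¹' ({0}ᶜ) := by
      ext x; simp [Function.mem_support]
    rw [this]
    exact (measurable_dfun hfin) (measurableSet_singleton 0).compl
  rw [Measure.restrict_apply hsupport]
  have hsub : s \ A ⊆ Function.support (dfun A) ∩ s := fun x hx =>
    ⟨(dfun_pos hfin hne hx.2).ne', hx.1⟩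
  refine lt_of_lt_of_le ?_ (measure_mono hsub)
  rw [measure_diff_null (Pfin_null hsupp hself hfin)]
  exact pos_iff_ne_zero.2 hs

lemma errBeta (hself : SelfSim P) : err P ({1/18, 5/18, 13/18, 17/18} : Set ℝ) ≤ 1/648 := by
  set β : Set ℝ := {1/18, 5/18, 13/18, 17/18} with hβ
  have hfin : β.Finite := Set.toFinite _
  have hne : β.Nonempty := ⟨1/18, by simp [hβ]⟩
  have hint : Integrable (dfun β) P := integrable_dfun hsupp hfin hne
  set A1 : Set ℝ := Set.Icc (0:ℝ) (1/9) with hA1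
  set A2 : Set ℝ := Set.Icc (2/9:ℝ) (1/3) with hA2
  set A3 : Set ℝ := Set.Icc (2/3:ℝ) (7/9) with hA3
  set A4 : Set ℝ := Set.Icc (8/9:ℝ) 1 with hA4
  set U4 : Set ℝ := ((A1 ∪ A2) ∪ A3) ∪ A4 with hU4
  have hm1 : MeasurableSet A1 := measurableSet_Icc
  have hm2 : MeasurableSet A2 := measurableSet_Icc
  have hm3 : MeasurableSet A3 := measurableSet_Icc
  have hm4 : MeasurableSet A4 := measurableSet_Icc
  have hmU : MeasurableSet U4 := (((hm1.union hm2).union hm3).union hm4)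
  have hd12 : Disjoint A1 A2 := by
    rw [Set.disjoint_left]; intro x h1 h2; have := h1.2; have := h2.1; linarith
  have hd3 : Disjoint (A1 ∪ A2) A3 := by
    rw [Set.disjoint_left]; rintro x (h1 | h1) h2 <;>
      [skip; skip] <;> (have := h1.2; have := h2.1; linarith)
  have hd4 : Disjoint ((A1 ∪ A2) ∪ A3) A4 := by
    rw [Set.disjoint_left]; rintro x ((h1 | h1) | h1) h2 <;>
      (have := h1.2; have := h2.1; linarith)
  have hmass : P U4 = 1 := by
    rw [hU4, measure_union hd4 hm4, measure_union hd3 hm3, measure_union hd12 hm2,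
        mass_J11 hsupp hself, mass_J12 hsupp hself, mass_J21 hsupp hself, mass_J22 hsupp hself]
    have h2 : (4⁻¹ : ℝ≥0∞) = 2⁻¹ * 2⁻¹ := by
      rw [← ENNReal.mul_inv (by norm_num) (by norm_num)]
      norm_num
    have hq : (2⁻¹ : ℝ≥0∞) * 2⁻¹ + 2⁻¹ * 2⁻¹ = 2⁻¹ := by
      rw [← mul_add, ENNReal.inv_two_add_inv_two, mul_one]
    rw [h2, add_assoc (2⁻¹ * 2⁻¹ + 2⁻¹ * 2⁻¹ : ℝ≥0∞), hq, ENNReal.inv_two_add_inv_two]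
  have hcompl : P U4ᶜ = 0 := by
    rw [measure_compl hmU (measure_ne_top _ _), hmass, measure_univ, tsub_self]
  have hsplit : err P β = ∫ x in U4, dfun β x ∂P := by
    rw [err_eq, ← integral_add_compl hmU hint,
        show P.restrict U4ᶜ = 0 from Measure.restrict_eq_zero.2 hcompl,
        integral_zero_measure, add_zero]
  have hub : ∀ (l r cc : ℝ), cc ∈ β → (∫ x in Set.Icc l r, (x - cc)^2 ∂P = 1/2592) →
      ∫ x in Set.Icc l r, dfun β x ∂P ≤ 1/2592 := by
    intro l r cc hcc hval
    rw [← hval]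
    refine setIntegral_mono_on hint.integrableOn ?_ measurableSet_Icc
      (fun x _ => dfun_le hcc x)
    exact (integrable_of_bound hsupp (by fun_prop) (bound_quad cc)).integrableOn
  have hb1 : ∫ x in A1, dfun β x ∂P ≤ 1/2592 :=
    hub 0 (1/9) (1/18) (by simp [hβ]) (EJ11 hsupp hself)
  have hb2 : ∫ x in A2, dfun β x ∂P ≤ 1/2592 :=
    hub (2/9) (1/3) (5/18) (by simp [hβ]) (EJ12 hsupp hself)
  have hb3 : ∫ x in A3, dfun β x ∂P ≤ 1/2592 :=
    hub (2/3) (7/9) (13/18) (by simp [hβ]) (EJ21 hsupp hself)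
  have hb4 : ∫ x in A4, dfun β x ∂P ≤ 1/2592 :=
    hub (8/9) 1 (17/18) (by simp [hβ]) (EJ22 hsupp hself)
  rw [hsplit, hU4, setIntegral_union hd4 hm4 (hint.integrableOn) (hint.integrableOn),
      setIntegral_union hd3 hm3 (hint.integrableOn) (hint.integrableOn),
      setIntegral_union hd12 hm2 (hint.integrableOn) (hint.integrableOn)]
  linarith

lemma V4le (hself : SelfSim P) {n : ℕ} (hn : 4 ≤ n) : quantErr P n ≤ 1/648 := by
  refine le_trans (quantErr_le (Set.toFinite _) ⟨1/18, by simp⟩ ?_) (errBeta hsupp hself)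
  calc ({1/18, 5/18, 13/18, 17/18} : Set ℝ).ncard
      ≤ ({5/18, 13/18, 17/18} : Set ℝ).ncard + 1 := Set.ncard_insert_le _ _
    _ ≤ (({13/18, 17/18} : Set ℝ).ncard + 1) + 1 := by
        have := Set.ncard_insert_le (5/18 : ℝ) ({13/18, 17/18} : Set ℝ)
        omega
    _ ≤ ((({17/18} : Set ℝ).ncard + 1) + 1) + 1 := by
        have := Set.ncard_insert_le (13/18 : ℝ) ({17/18} : Set ℝ)
        omega
    _ ≤ 4 := by
        rw [Set.ncard_singleton]
    _ ≤ n := hn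

end QAux

open QAux

theorem optimal_two_in_each_end (P : Measure ℝ) [IsProbabilityMeasure P]
    (hsupp : P (Set.Icc 0 1) = 1) (hself : SelfSim P)
    (n : ℕ) (hn : 4 ≤ n) (α : Set ℝ) (hα : IsOptimal P n α) :
    2 ≤ (α ∩ Set.Icc (0 : ℝ) (1 / 3)).ncard ∧ 2 ≤ (α ∩ Set.Icc (2 / 3 : ℝ) 1).ncard := by
  obtain ⟨hfin, hne, hcard, heq⟩ := hα
  have hsub := opt_subset hsupp hself hfin hne hcard heq
  have hV4 : quantErr P n ≤ 1/648 := V4le hsupp hself hn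
  have herr648 : err P α ≤ 1/648 := heq ▸ hV4
  have hint : Integrable (dfun α) P := integrable_dfun hsupp hfin hne
  have hsum : ∫ x in Set.Icc (0:ℝ) (1/3), dfun α x ∂P
      + ∫ x in Set.Icc (2/3:ℝ) 1, dfun α x ∂P ≤ err P α := by
    rw [err_eq]
    have hdisj : Disjoint (Set.Icc (0:ℝ) (1/3)) (Set.Icc (2/3:ℝ) 1) := by
      rw [Set.disjoint_left]
      intro x h1 h2
      have := h1.2; have := h2.1; linarith
    rw [← setIntegral_union hdisj measurableSet_Icc hint.integrableOn hint.integrableOn]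
    exact setIntegral_le_integral hint (Filter.Eventually.of_forall (dfun_nonneg α))
  constructor
  · by_contra hlt
    push_neg at hlt
    have hle1 : (α ∩ Set.Icc (0:ℝ) (1/3)).ncard ≤ 1 := by omega
    obtain ⟨c, hcmem, hconly⟩ :
        ∃ c ∈ Set.Icc (0:ℝ) (1/3), ∀ a ∈ α, a ∈ Set.Icc (0:ℝ) (1/3) → a = c := by
      rcases (α ∩ Set.Icc (0:ℝ) (1/3)).eq_empty_or_nonempty with hemp | ⟨c, hc⟩
      · exact ⟨1/6, by norm_num,
          fun a ha hai => absurd (Set.mem_inter ha hai) (by rw [hemp]; simp)⟩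
      · exact ⟨c, hc.2, fun a ha hai =>
          (Set.ncard_le_one_iff (hfin.inter_of_left _)).1 hle1 ⟨ha, hai⟩ hc⟩
    have hpt : ∀ x ∈ Set.Icc (0:ℝ) (1/3),
        min ((x - c)^2) ((1/3 - x)^2) ≤ dfun α x := by
      intro x hx
      refine le_dfun hne (fun a ha => ?_)
      by_cases hai : a ∈ Set.Icc (0:ℝ) (1/3)
      · calc min ((x - c)^2) ((1/3 - x)^2) ≤ (x - c)^2 := min_le_left _ _
          _ = (x - a)^2 := by rw [hconly a ha hai]
      · have ha01 := hsub a ha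
        have ha13 : 1/3 < a := by
          rcases lt_or_ge (1/3) a with h | h
          · exact h
          · exact absurd ⟨ha01.1, h⟩ hai
        refine (min_le_right _ _).trans ?_
        have hm : (0:ℝ) ≤ (a - 1/3)*(a + 1/3 - 2*x) :=
          mul_nonneg (by linarith) (by linarith [hx.2])
        nlinarith [hm]
    have hminint : Integrable (fun x => min ((x - c)^2) ((1/3 - x)^2)) P := by
      refine integrable_of_bound hsupp (Measurable.min (by fun_prop) (by fun_prop))
        (C := (1+|c|)^2) (fun x hx => ?_)
      rw [abs_of_nonneg (le_min (sq_nonneg _) (sq_nonneg _))]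
      refine (min_le_left _ _).trans ?_
      have := bound_quad c x hx
      rwa [abs_of_nonneg (sq_nonneg _)] at this
    have hL : 1/648 ≤ ∫ x in Set.Icc (0:ℝ) (1/3), dfun α x ∂P := by
      refine le_trans (LBound hsupp hself hcmem) ?_
      exact setIntegral_mono_on hminint.integrableOn hint.integrableOn measurableSet_Icc hpt
    have hR : 0 < ∫ x in Set.Icc (2/3:ℝ) 1, dfun α x ∂P := by
      refine side_pos hsupp hself hfin hne measurableSet_Icc ?_
      rw [mass_right hsupp hself]
      exact ENNReal.inv_ne_zero.2 (by norm_num)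
    linarith
  · by_contra hlt
    push_neg at hlt
    have hle1 : (α ∩ Set.Icc (2/3:ℝ) 1).ncard ≤ 1 := by omega
    obtain ⟨c, hcmem, hconly⟩ :
        ∃ c ∈ Set.Icc (2/3:ℝ) 1, ∀ a ∈ α, a ∈ Set.Icc (2/3:ℝ) 1 → a = c := by
      rcases (α ∩ Set.Icc (2/3:ℝ) 1).eq_empty_or_nonempty with hemp | ⟨c, hc⟩
      · exact ⟨5/6, by norm_num,
          fun a ha hai => absurd (Set.mem_inter ha hai) (by rw [hemp]; simp)⟩
      · exact ⟨c, hc.2, fun a ha hai =>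
          (Set.ncard_le_one_iff (hfin.inter_of_left _)).1 hle1 ⟨ha, hai⟩ hc⟩
    have hpt : ∀ x ∈ Set.Icc (2/3:ℝ) 1,
        min ((x - c)^2) ((x - 2/3)^2) ≤ dfun α x := by
      intro x hx
      refine le_dfun hne (fun a ha => ?_)
      by_cases hai : a ∈ Set.Icc (2/3:ℝ) 1
      · calc min ((x - c)^2) ((x - 2/3)^2) ≤ (x - c)^2 := min_le_left _ _
          _ = (x - a)^2 := by rw [hconly a ha hai]
      · have ha01 := hsub a ha
        have ha23 : a < 2/3 := by
          rcases lt_or_ge a (2/3) with h | h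
          · exact h
          · exact absurd ⟨h, ha01.2⟩ hai
        refine (min_le_right _ _).trans ?_
        have hm : (0:ℝ) ≤ (2/3 - a)*(2*x - a - 2/3) :=
          mul_nonneg (by linarith) (by linarith [hx.1])
        nlinarith [hm]
    have hminint : Integrable (fun x => min ((x - c)^2) ((x - 2/3)^2)) P := by
      refine integrable_of_bound hsupp (Measurable.min (by fun_prop) (by fun_prop))
        (C := (1+|c|)^2) (fun x hx => ?_)
      rw [abs_of_nonneg (le_min (sq_nonneg _) (sq_nonneg _))]
      refine (min_le_left _ _).trans ?_
      have := bound_quad c x hx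
      rwa [abs_of_nonneg (sq_nonneg _)] at this
    have hR : 1/648 ≤ ∫ x in Set.Icc (2/3:ℝ) 1, dfun α x ∂P := by
      refine le_trans (RBound hsupp hself hcmem) ?_
      exact setIntegral_mono_on hminint.integrableOn hint.integrableOn measurableSet_Icc hpt
    have hL : 0 < ∫ x in Set.Icc (0:ℝ) (1/3), dfun α x ∂P := by
      refine side_pos hsupp hself hfin hne measurableSet_Icc ?_
      rw [mass_left hsupp hself]
      exact ENNReal.inv_ne_zero.2 (by norm_num)
    linarith


end
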